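/- Let n be a positive natural, let Q : Matrix (Fin n) (Fin n) ℝ be symmetric positive definite, let c > 0 and r ≥ 0 be reals, and let a : Fin n → ℝ. Let S be the positive semidefinite square root of (1/c)·Q. Then ‖S *ᵥ a‖ ≤ r if and only if the (1+n)×(1+n) symmetric block matrix with top-left 1×1 block r²·c, top-right 1×n block (Q *ᵥ a)ᵀ, bottom-left n×1 block Q *ᵥ a, and bottom-right n×n block Q, is positive semidefinite. -/

import Mathlib

open Matrix

lemma one_dim_psd (M : Matrix (Fin 1) (Fin 1) ℝ) : M.PosSemidef ↔ 0 ≤ M 0 0 := by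
  constructor
  · intro h
    simpa [dotProduct, mulVec, Fin.sum_univ_one] using h.dotProduct_mulVec_nonneg (fun _ => 1)
  · intro h
    refine .of_dotProduct_mulVec_nonneg ?_ (fun x => ?_)
    · ext i j; fin_cases i; fin_cases j; simp [conjTranspose_apply]
    · have hx : star x ⬝ᵥ M *ᵥ x = M 0 0 * (x 0 * x 0) := by
        simp [dotProduct, mulVec, Fin.sum_univ_one]; ring
      rw [hx]
      exact mul_nonneg h (mul_self_nonneg _)

theorem state_funnel_lmi
    (n : ℕ) (hn : 0 < n)
    (Q : Matrix (Fin n) (Fin n) ℝ) (hQ : Q.PosDef)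
    (c r : ℝ) (hc : 0 < c) (hr : 0 ≤ r)
    (a : Fin n → ℝ)
    (S : Matrix (Fin n) (Fin n) ℝ) (hS : S.PosSemidef)
    (hS2 : S * S = c⁻¹ • Q) :
    Real.sqrt ((S *ᵥ a) ⬝ᵥ (S *ᵥ a)) ≤ r ↔
      (Matrix.fromBlocks
        (Matrix.of fun (_ : Fin 1) (_ : Fin 1) => r ^ 2 * c)
        (Matrix.of fun (_ : Fin 1) (j : Fin n) => (Q *ᵥ a) j)
        (Matrix.of fun (i : Fin n) (_ : Fin 1) => (Q *ᵥ a) i)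
        Q).PosSemidef := by
  haveI hQinv : Invertible Q :=
    Q.invertibleOfIsUnitDet (isUnit_iff_ne_zero.mpr hQ.det_pos.ne')
  set t : ℝ := a ⬝ᵥ Q *ᵥ a with ht
  have hSsym : Sᵀ = S := by
    have := hS.isHermitian
    exact (by simpa using this : S.IsSymm)
  have hSa : (S *ᵥ a) ⬝ᵥ (S *ᵥ a) = c⁻¹ * t := by
    rw [dotProduct_mulVec, ← mulVec_transpose, hSsym, mulVec_mulVec, hS2,
      dotProduct_comm]
    simp [smul_mulVec, ht, smul_eq_mul]
  have ht0 : 0 ≤ t := by simpa using hQ.posSemidef.dotProduct_mulVec_nonneg a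
  have hB : (Matrix.of fun (i : Fin n) (_ : Fin 1) => (Q *ᵥ a) i) =
      (Matrix.of fun (_ : Fin 1) (j : Fin n) => (Q *ᵥ a) j)ᴴ := by
    ext i j; simp [conjTranspose_apply]
  rw [hB, Matrix.PosDef.fromBlocks₂₂ _ _ hQ, one_dim_psd]
  set B : Matrix (Fin 1) (Fin n) ℝ := Matrix.of fun (_ : Fin 1) (j : Fin n) => (Q *ᵥ a) j with hBdef
  have hmv : Q⁻¹ *ᵥ (Q *ᵥ a) = a := by
    rw [mulVec_mulVec, Matrix.nonsing_inv_mul _ (isUnit_iff_ne_zero.mpr hQ.det_pos.ne'), one_mulVec]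
  have e1 : ∀ k, (B * Q⁻¹) 0 k = ((Q *ᵥ a) ᵥ* Q⁻¹) k := by
    intro k; simp [hBdef, Matrix.mul_apply, vecMul, dotProduct]
  have e2 : (B * Q⁻¹ * Bᴴ) 0 0 = ((Q *ᵥ a) ᵥ* Q⁻¹) ⬝ᵥ (Q *ᵥ a) := by
    rw [Matrix.mul_apply]
    simp only [e1, conjTranspose_apply, hBdef, Matrix.of_apply, star_trivial]
    rfl
  have hentry : ((Matrix.of fun (_ : Fin 1) (_ : Fin 1) => r ^ 2 * c) -
      B * Q⁻¹ * Bᴴ) 0 0 = r ^ 2 * c - t := by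
    rw [Matrix.sub_apply, e2, ← dotProduct_mulVec, hmv, dotProduct_comm]
    simp [ht]
  rw [hentry]
  constructor
  · intro h
    have h2 : (S *ᵥ a) ⬝ᵥ (S *ᵥ a) ≤ r ^ 2 := by
      nlinarith [Real.sq_sqrt (hSa ▸ (mul_nonneg (inv_nonneg.mpr hc.le) ht0)),
        Real.sqrt_nonneg ((S *ᵥ a) ⬝ᵥ (S *ᵥ a))]
    rw [hSa, inv_mul_le_iff₀ hc] at h2
    nlinarith
  · intro h
    have h2 : (S *ᵥ a) ⬝ᵥ (S *ᵥ a) ≤ r ^ 2 := by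
      rw [hSa, inv_mul_le_iff₀ hc]; nlinarith
    calc Real.sqrt ((S *ᵥ a) ⬝ᵥ (S *ᵥ a)) ≤ Real.sqrt (r ^ 2) := Real.sqrt_le_sqrt h2
      _ = r := by rw [Real.sqrt_sq hr]
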